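/- arXiv:1305.0805 — 2 statements merged into one kernel-verified Lean document; each statement's English description precedes it below -/
import Mathlib

section
/- Let q = p^m with p prime, ω = exp(2πi/p), and tr : F_q → F_p the field trace. Let G be a k×n matrix over F_q of rank k, A ⊆ {1,…,n} with complement B, and suppose rank(G_B) = k. Let c : F_q^k → ℂ satisfy Σ_{x ∈ F_q^k} |c(x)|² = 1, and for a ∈ F_q^{|A|} define Φ_a(w) = q^{-|A|/2} Σ_{x ∈ F_q^k, x·G_B = w} c(x) ω^{-tr((x·G_A)·a^T)} for w ∈ F_q^{|B|}. Then Σ_{w ∈ F_q^{|B|}} |Φ_a(w)|² = q^{-|A|}; in particular the probability of every measurement outcome a is 1/q^{|A|}, independent of a and of the amplitudes c. -/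
/-- With `rank G = rank G_B = k` and normalized amplitudes `c`, the
unnormalized post-measurement amplitude function
`Φ_a(w) = q^{-|A|/2} ∑_{x·G_B = w} c(x) ω^{-tr((x·G_A)·aᵀ)}` satisfies
`∑_w |Φ_a(w)|² = q^{-|A|}`: every Fourier measurement outcome `a` of the subset `A`
occurs with probability `1/q^{|A|}`, independent of `a` and of `c`. -/
theorem stmt_4 (p m k n : ℕ) [Fact p.Prime] (hm : m ≠ 0)
    (F : Type) [Field F] [Fintype F] [DecidableEq F] [Algebra (ZMod p) F]
    (hcard : Fintype.card F = p ^ m)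
    (tr : F → ZMod p)
    (htr : ∀ x : F, algebraMap (ZMod p) F (tr x) = ∑ i ∈ Finset.range m, x ^ p ^ i)
    (ω : ℂ) (hω : ω = Complex.exp (2 * Real.pi * Complex.I / p))
    (G : Matrix (Fin k) (Fin n) F) (hG : G.rank = k)
    (A : Finset (Fin n))
    (hB : (G.submatrix id (fun j : ↥(Aᶜ) => (j : Fin n))).rank = k)
    (c : (Fin k → F) → ℂ)
    (hc : ∑ x : Fin k → F, ‖c x‖ ^ 2 = 1)
    (a : A → F)
    (Φ : (↥(Aᶜ) → F) → ℂ)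
    (hΦ : ∀ w : ↥(Aᶜ) → F,
      Φ w = ((Real.sqrt ((p : ℝ) ^ m) : ℂ))⁻¹ ^ A.card *
        ∑ x ∈ Finset.univ.filter (fun x : Fin k → F =>
            Matrix.vecMul x (G.submatrix id (fun j : ↥(Aᶜ) => (j : Fin n))) = w),
          c x * ω ^ (-((tr (∑ j : A,
            Matrix.vecMul x (G.submatrix id (fun j' : A => (j' : Fin n))) j * a j)).val : ℤ))) :
    ∑ w : ↥(Aᶜ) → F, ‖Φ w‖ ^ 2 = (((p : ℝ) ^ m)⁻¹) ^ A.card := by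
  classical
  set GB := G.submatrix id (fun j : ↥(Aᶜ) => (j : Fin n)) with hGBdef
  -- injectivity of x ↦ x ⬝ᵥ GB
  have hinj : Function.Injective (fun x : Fin k → F => Matrix.vecMul x GB) := by
    have h1 : (GB.transpose).rank = k := by rw [Matrix.rank_transpose]; exact hB
    have h2 : LinearMap.ker (GB.transpose.mulVecLin) = ⊥ := by
      have h3 := (GB.transpose.mulVecLin).finrank_range_add_finrank_ker
      rw [show Module.finrank F (LinearMap.range GB.transpose.mulVecLin) = k from h1] at h3
      have h4 : Module.finrank F (Fin k → F) = k := by simp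
      rw [h4] at h3
      have h5 : Module.finrank F (LinearMap.ker GB.transpose.mulVecLin) = 0 := by omega
      exact Submodule.finrank_eq_zero.mp h5
    intro x y hxy
    have : GB.transpose.mulVecLin x = GB.transpose.mulVecLin y := by
      simpa [Matrix.mulVecLin_apply, Matrix.mulVec_transpose] using hxy
    exact LinearMap.ker_eq_bot.mp h2 this
  -- |ω| = 1
  have habsω : ‖ω‖ = 1 := by
    rw [hω, Complex.norm_exp]
    have : (2 * ↑Real.pi * Complex.I / ↑p).re = 0 := by
      rw [Complex.div_natCast_re]
      simp [Complex.mul_re]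
    rw [this, Real.exp_zero]
  have hωne : ω ≠ 0 := by
    intro h; rw [h] at habsω; simp at habsω
  -- fiberwise key
  have key : ∀ w : ↥(Aᶜ) → F,
      ‖(∑ x ∈ Finset.univ.filter (fun x : Fin k → F =>
            Matrix.vecMul x GB = w),
          c x * ω ^ (-((tr (∑ j : A,
            Matrix.vecMul x (G.submatrix id (fun j' : A => (j' : Fin n))) j * a j)).val : ℤ)))‖ ^ 2
      = ∑ x ∈ Finset.univ.filter (fun x : Fin k → F => Matrix.vecMul x GB = w),
          ‖c x‖ ^ 2 := by
    intro w
    set s := Finset.univ.filter (fun x : Fin k → F => Matrix.vecMul x GB = w) with hs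
    have hcard1 : s.card ≤ 1 := by
      apply Finset.card_le_one.mpr
      intro x hx y hy
      rw [hs, Finset.mem_filter] at hx hy
      exact hinj (hx.2.trans hy.2.symm)
    interval_cases h : s.card
    · rw [Finset.card_eq_zero.mp h]; simp
    · obtain ⟨x, hx⟩ := Finset.card_eq_one.mp h
      rw [hx]
      simp only [Finset.sum_singleton, norm_mul, mul_pow]
      rw [norm_zpow, habsω]
      simp
  -- abs of the normalizing constant
  have hCpos : (0:ℝ) < (p:ℝ) ^ m := by
    have : (0:ℝ) < (p:ℝ) := by exact_mod_cast (Fact.out : p.Prime).pos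
    positivity
  have hCabs : ‖(((Real.sqrt ((p : ℝ) ^ m) : ℂ))⁻¹ ^ A.card)‖ ^ 2
      = (((p : ℝ) ^ m)⁻¹) ^ A.card := by
    rw [norm_pow, norm_inv, Complex.norm_real, Real.norm_eq_abs,
      abs_of_nonneg (Real.sqrt_nonneg _)]
    rw [← pow_mul, mul_comm A.card 2, pow_mul]
    congr 1
    rw [← Real.sqrt_inv, Real.sq_sqrt (by positivity)]
  calc ∑ w : ↥(Aᶜ) → F, ‖Φ w‖ ^ 2
      = ∑ w : ↥(Aᶜ) → F, (((p : ℝ) ^ m)⁻¹) ^ A.card *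
          ∑ x ∈ Finset.univ.filter (fun x : Fin k → F => Matrix.vecMul x GB = w),
            ‖c x‖ ^ 2 := by
        refine Finset.sum_congr rfl fun w _ => ?_
        rw [hΦ w, norm_mul, mul_pow, hCabs, key w]
    _ = (((p : ℝ) ^ m)⁻¹) ^ A.card := by
        rw [← Finset.mul_sum,
          Finset.sum_fiberwise Finset.univ (fun x : Fin k → F => Matrix.vecMul x GB)
            (fun x => ‖c x‖ ^ 2), hc, mul_one]
end

section
/- Let q = p^m with p prime, ω = exp(2πi/p), and tr : F_q → F_p the field trace. Let G be a k×n matrix over F_q, A ⊆ {1,…,n} with complement B, with rank(G_B) = k. Let c : F_q^k → ℂ, let a ∈ F_q^{|A|}, and define Φ_a : F_q^{|B|} → ℂ by Φ_a(w) = q^{-|A|/2} Σ_{x ∈ F_q^k, x·G_B = w} c(x) ω^{-tr((x·G_A)·a^T)}. If z ∈ F_q^{|B|} satisfies G_B·z^T = G_A·a^T, then for every x ∈ F_q^k, ω^{tr((x·G_B)·z^T)} · Φ_a(x·G_B) = q^{-|A|/2} c(x); that is, applying the phase correction Z^z followed by the isometry |x·G_B⟩ ↦ |x⟩ recovers the original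 secret amplitudes exactly (up to the overall normalization q^{-|A|/2}). -/
/-- If `rank G_B = k` and `z` solves `G_B · zᵀ = G_A · aᵀ`, then applying
the phase correction `Z^z` followed by the isometry `|x·G_B⟩ ↦ |x⟩` to the
post-measurement amplitudes `Φ_a` recovers the secret amplitudes: for every `x`,
`ω^{tr((x·G_B)·zᵀ)} · Φ_a(x·G_B) = q^{-|A|/2} c(x)`. -/
theorem stmt_6 (p m k n : ℕ) [Fact p.Prime] (hm : m ≠ 0)
    (F : Type) [Field F] [Fintype F] [DecidableEq F] [Algebra (ZMod p) F]
    (hcard : Fintype.card F = p ^ m)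
    (tr : F → ZMod p)
    (htr : ∀ x : F, algebraMap (ZMod p) F (tr x) = ∑ i ∈ Finset.range m, x ^ p ^ i)
    (ω : ℂ) (hω : ω = Complex.exp (2 * Real.pi * Complex.I / p))
    (G : Matrix (Fin k) (Fin n) F)
    (A : Finset (Fin n))
    (hB : (G.submatrix id (fun j : ↥(Aᶜ) => (j : Fin n))).rank = k)
    (c : (Fin k → F) → ℂ)
    (a : A → F)
    (Φ : (↥(Aᶜ) → F) → ℂ)
    (hΦ : ∀ w : ↥(Aᶜ) → F,
      Φ w = ((Real.sqrt ((p : ℝ) ^ m) : ℂ))⁻¹ ^ A.card *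
        ∑ x ∈ Finset.univ.filter (fun x : Fin k → F =>
            Matrix.vecMul x (G.submatrix id (fun j : ↥(Aᶜ) => (j : Fin n))) = w),
          c x * ω ^ (-((tr (∑ j : A,
            Matrix.vecMul x (G.submatrix id (fun j' : A => (j' : Fin n))) j * a j)).val : ℤ)))
    (z : ↥(Aᶜ) → F)
    (hz : (G.submatrix id (fun j : ↥(Aᶜ) => (j : Fin n))).mulVec z =
      (G.submatrix id (fun j : A => (j : Fin n))).mulVec a) :
    ∀ x : Fin k → F,
      ω ^ (tr (∑ j : ↥(Aᶜ),
          Matrix.vecMul x (G.submatrix id (fun j' : ↥(Aᶜ) => (j' : Fin n))) j * z j)).val *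
        Φ (Matrix.vecMul x (G.submatrix id (fun j : ↥(Aᶜ) => (j : Fin n)))) =
      ((Real.sqrt ((p : ℝ) ^ m) : ℂ))⁻¹ ^ A.card * c x := by
  intro x
  set M := G.submatrix id (fun j : ↥(Aᶜ) => (j : Fin n)) with hM
  set N := G.submatrix id (fun j : A => (j : Fin n)) with hN
  have hinj : Function.Injective M.vecMul := by
    rw [Matrix.vecMul_injective_iff]
    rw [linearIndependent_iff_card_eq_finrank_span]
    rw [Fintype.card_fin, Set.finrank, ← Matrix.rank_eq_finrank_span_row, hB]
  have hfilter : (Finset.univ.filter (fun y : Fin k → F =>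
      Matrix.vecMul y M = Matrix.vecMul x M)) = {x} := by
    ext y
    simp only [Finset.mem_filter, Finset.mem_univ, true_and, Finset.mem_singleton]
    exact ⟨fun h => hinj h, fun h => by rw [h]⟩
  have htr_eq : (∑ j : ↥(Aᶜ), Matrix.vecMul x M j * z j)
      = ∑ j : A, Matrix.vecMul x N j * a j := by
    have h1 : (∑ j : ↥(Aᶜ), Matrix.vecMul x M j * z j) = dotProduct x (M.mulVec z) := by
      rw [Matrix.dotProduct_mulVec]; rfl
    have h2 : (∑ j : A, Matrix.vecMul x N j * a j) = dotProduct x (N.mulVec a) := by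
      rw [Matrix.dotProduct_mulVec]; rfl
    rw [h1, h2, hz]
  have hω0 : ω ≠ 0 := by rw [hω]; exact Complex.exp_ne_zero _
  rw [hΦ, hfilter, Finset.sum_singleton, htr_eq]
  set t := (tr (∑ j : A, Matrix.vecMul x N j * a j)).val
  have : ω ^ (-(t : ℤ)) = (ω ^ t)⁻¹ := by rw [zpow_neg, zpow_natCast]
  rw [this]
  field_simp
end
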